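/- In the setting of linear identifiability, if p_{f,g} = p_{f',g'} pointwise, then the unembeddings satisfy g(y) = A^{-T} g'(y) + b for a fixed vector b ∈ ℝ^M independent of y, where A = L^{-T} L'^{T}. -/

import Mathlib

open Matrix

/-- The softmax conditional model `p_{f,g}(y|x)`. -/
noncomputable def softmax {X Y : Type*} [Fintype Y] {M : ℕ}
    (f : X → Fin M → ℝ) (g : Y → Fin M → ℝ) (x : X) (y : Y) : ℝ :=
  Real.exp (∑ i, f x i * g y i) / ∑ y' : Y, Real.exp (∑ i, f x i * g y' i)

/-- Linear identifiability of softmax models under the diversity condition. -/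
theorem unembedding_affine_identifiability {X Y : Type*} [Fintype Y] {M : ℕ}
    (f f' : X → Fin M → ℝ) (g g' : Y → Fin M → ℝ)
    (y₀ : Y) (ys : Fin M → Y) (x₀ : X) (xs : Fin M → X)
    (hdivg : LinearIndependent ℝ (fun i => g (ys i) - g y₀))
    (hdivf : LinearIndependent ℝ (fun i => f (xs i) - f x₀))
    (heq : ∀ x y, softmax f g x y = softmax f' g' x y)
    (L L' A : Matrix (Fin M) (Fin M) ℝ)
    (hL : ∀ i j, L i j = g (ys j) i - g y₀ i)
    (hL' : ∀ i j, L' i j = g' (ys j) i - g' y₀ i)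
    (hA : A = (Lᵀ)⁻¹ * L'ᵀ) :
    ∃ b : Fin M → ℝ, ∀ y, g y = (Aᵀ)⁻¹.mulVec (g' y) + b := by
  -- Step 1: log-ratio identity
  have hS : ∀ x y, (∑ i, f x i * g y i) - (∑ i, f x i * g y₀ i)
      = (∑ i, f' x i * g' y i) - (∑ i, f' x i * g' y₀ i) := by
    intro x y
    have hD : (0:ℝ) < ∑ y' : Y, Real.exp (∑ i, f x i * g y' i) :=
      Finset.sum_pos (fun y' _ => Real.exp_pos _) ⟨y, Finset.mem_univ y⟩
    have hD' : (0:ℝ) < ∑ y' : Y, Real.exp (∑ i, f' x i * g' y' i) :=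
      Finset.sum_pos (fun y' _ => Real.exp_pos _) ⟨y, Finset.mem_univ y⟩
    have h1 := heq x y
    have h2 := heq x y₀
    unfold softmax at h1 h2
    have hratio : Real.exp (∑ i, f x i * g y i) / Real.exp (∑ i, f x i * g y₀ i)
        = Real.exp (∑ i, f' x i * g' y i) / Real.exp (∑ i, f' x i * g' y₀ i) := by
      rw [div_eq_div_iff hD.ne' hD'.ne'] at h1 h2
      rw [div_eq_div_iff (Real.exp_pos _).ne' (Real.exp_pos _).ne']
      nlinarith [Real.exp_pos (∑ i, f x i * g y i), Real.exp_pos (∑ i, f x i * g y₀ i),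
        Real.exp_pos (∑ i, f' x i * g' y i), Real.exp_pos (∑ i, f' x i * g' y₀ i), hD, hD']
    rw [← Real.exp_sub, ← Real.exp_sub] at hratio
    exact Real.exp_injective hratio
  have key : ∀ x y, (∑ i, (f x i - f x₀ i) * (g y i - g y₀ i))
      = ∑ i, (f' x i - f' x₀ i) * (g' y i - g' y₀ i) := by
    intro x y
    have h1 := hS x y
    have h2 := hS x₀ y
    have e1 : (∑ i, (f x i - f x₀ i) * (g y i - g y₀ i))
        = ((∑ i, f x i * g y i) - (∑ i, f x i * g y₀ i))
          - ((∑ i, f x₀ i * g y i) - (∑ i, f x₀ i * g y₀ i)) := by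
      simp only [sub_mul, mul_sub, Finset.sum_sub_distrib]; ring
    have e2 : (∑ i, (f' x i - f' x₀ i) * (g' y i - g' y₀ i))
        = ((∑ i, f' x i * g' y i) - (∑ i, f' x i * g' y₀ i))
          - ((∑ i, f' x₀ i * g' y i) - (∑ i, f' x₀ i * g' y₀ i)) := by
      simp only [sub_mul, mul_sub, Finset.sum_sub_distrib]; ring
    rw [e1, e2, h1, h2]
  -- matrices K, K'
  set K : Matrix (Fin M) (Fin M) ℝ := fun i j => f (xs j) i - f x₀ i with hK
  set K' : Matrix (Fin M) (Fin M) ℝ := fun i j => f' (xs j) i - f' x₀ i with hK'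
  have hLunit : IsUnit L := by
    rw [← Matrix.linearIndependent_cols_iff_isUnit]
    have h : (fun j => Lᵀ j) = fun i => g (ys i) - g y₀ := by
      funext j; funext i; simp [Matrix.transpose_apply, hL, Pi.sub_apply]
    change LinearIndependent ℝ (fun j => Lᵀ j); rw [h]; exact hdivg
  have hKunit : IsUnit K := by
    rw [← Matrix.linearIndependent_cols_iff_isUnit]
    have h : (fun j => Kᵀ j) = fun i => f (xs i) - f x₀ := by
      funext j; funext i; simp [Matrix.transpose_apply, hK, Pi.sub_apply]; rfl
    change LinearIndependent ℝ (fun j => Kᵀ j); rw [h]; exact hdivf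
  have hKTunit : IsUnit Kᵀ := (Matrix.isUnit_transpose K).2 hKunit
  -- matrix identity Kᵀ L = K'ᵀ L'
  have hmat : Kᵀ * L = K'ᵀ * L' := by
    ext j k
    simp only [Matrix.mul_apply, Matrix.transpose_apply, hK, hK', hL, hL']
    exact key (xs j) (ys k)
  have hKLunit : IsUnit (K'ᵀ * L') := by
    rw [← hmat]; exact hKTunit.mul hLunit
  have hL'unit : IsUnit L' := by
    rw [Matrix.isUnit_iff_isUnit_det] at hKLunit ⊢
    rw [Matrix.det_mul] at hKLunit
    exact isUnit_of_mul_isUnit_right hKLunit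
  -- vector identity for all y
  have hvec : ∀ y, Kᵀ.mulVec (g y - g y₀) = K'ᵀ.mulVec (g' y - g' y₀) := by
    intro y
    ext j
    simp only [Matrix.mulVec, dotProduct, Matrix.transpose_apply, hK, hK',
      Pi.sub_apply]
    exact key (xs j) y
  -- (Kᵀ)⁻¹ * K'ᵀ = L * L'⁻¹
  have hKK' : (Kᵀ)⁻¹ * K'ᵀ = L * L'⁻¹ := by
    have h1 : Kᵀ * (L * L'⁻¹) = K'ᵀ := by
      rw [← Matrix.mul_assoc, hmat, Matrix.mul_assoc,
        Matrix.mul_nonsing_inv _ ((Matrix.isUnit_iff_isUnit_det _).1 hL'unit),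
        Matrix.mul_one]
    rw [← h1, ← Matrix.mul_assoc,
      Matrix.nonsing_inv_mul _ ((Matrix.isUnit_iff_isUnit_det _).1 hKTunit),
      Matrix.one_mul]
  -- (Aᵀ)⁻¹ = L * L'⁻¹
  have hAinv : (Aᵀ)⁻¹ = L * L'⁻¹ := by
    rw [hA, Matrix.transpose_mul, Matrix.transpose_transpose, Matrix.transpose_nonsing_inv,
      Matrix.transpose_transpose, Matrix.mul_inv_rev,
      Matrix.nonsing_inv_nonsing_inv _ ((Matrix.isUnit_iff_isUnit_det _).1 hLunit)]
  refine ⟨g y₀ - (L * L'⁻¹).mulVec (g' y₀), fun y => ?_⟩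
  have h2 : g y - g y₀ = (L * L'⁻¹).mulVec (g' y - g' y₀) := by
    have := congrArg (fun v => ((Kᵀ)⁻¹).mulVec v) (hvec y)
    simpa [Matrix.mulVec_mulVec, hKK',
      Matrix.nonsing_inv_mul _ ((Matrix.isUnit_iff_isUnit_det _).1 hKTunit)] using this
  rw [hAinv]
  have := h2
  rw [Matrix.mulVec_sub] at this
  funext i
  have hi := congrFun this i
  simp only [Pi.sub_apply, Pi.add_apply] at hi ⊢
  linarith
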